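/- Let f and g be nonzero rational functions in ℂ(t). For a point p ∈ ℂ let ord_p denote the order of vanishing of a rational function at p, and let ord_∞ h := (degree of the denominator of h) − (degree of the numerator of h). For each p ∈ ℂ ∪ {∞} define the tame symbol d_p(f,g) := (−1)^{ord_p(f)·ord_p(g)} times the value at p of the rational function f^{ord_p(g)}/g^{ord_p(f)} (this rational function has neither a zero nor a pole at p, so the value is a nonzero complex number). Then d_p(f,g) = 1 for all but finitely many p, and the product over all p ∈ ℂ ∪ {∞} of d_p(f,g) equals 1. -/

import Mathlib

open Polynomial

/-- Order of vanishing of a rational function at a finite point `p ∈ ℂ`: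
the multiplicity of `(t - p)` (positive for zeros, negative for poles). -/
noncomputable def ordAt (p : ℂ) (h : RatFunc ℂ) : ℤ :=
  (h.num.rootMultiplicity p : ℤ) - (h.denom.rootMultiplicity p : ℤ)

/-- Order of vanishing at infinity: degree of denominator minus degree of numerator. -/
noncomputable def ordInf (h : RatFunc ℂ) : ℤ :=
  (h.denom.natDegree : ℤ) - (h.num.natDegree : ℤ)

/-- Value at infinity of a rational function having neither zero nor pole at infinity:
the ratio of the leading coefficients. -/
noncomputable def evalInf (h : RatFunc ℂ) : ℂ :=
  h.num.leadingCoeff / h.denom.leadingCoeff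

/-- The tame symbol of `f` and `g` at a finite point `p ∈ ℂ`. -/
noncomputable def tameSymbolAt (p : ℂ) (f g : RatFunc ℂ) : ℂ :=
  (-1 : ℂ) ^ (ordAt p f * ordAt p g) *
    RatFunc.eval (RingHom.id ℂ) p (f ^ (ordAt p g) / g ^ (ordAt p f))

/-- The tame symbol of `f` and `g` at the point at infinity. -/
noncomputable def tameSymbolInf (f g : RatFunc ℂ) : ℂ :=
  (-1 : ℂ) ^ (ordInf f * ordInf g) * evalInf (f ^ (ordInf g) / g ^ (ordInf f))

/-! ### Auxiliary definitions -/

/-- The polynomial `P` with all factors of `X - C p` stripped off. -/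
noncomputable def strip (p : ℂ) (P : ℂ[X]) : ℂ[X] :=
  P /ₘ (X - C p) ^ (P.rootMultiplicity p)

/-- The value at `p` of the unit part of `h` at `p`. -/
noncomputable def leadAt (p : ℂ) (h : RatFunc ℂ) : ℂ :=
  (strip p h.num).eval p / (strip p h.denom).eval p

lemma strip_spec (p : ℂ) (P : ℂ[X]) :
    (X - C p) ^ (P.rootMultiplicity p) * strip p P = P :=
  pow_mul_divByMonic_rootMultiplicity_eq P p

lemma strip_eval_ne_zero (p : ℂ) {P : ℂ[X]} (hP : P ≠ 0) :
    (strip p P).eval p ≠ 0 :=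
  eval_divByMonic_pow_rootMultiplicity_ne_zero p hP

lemma strip_one (p : ℂ) : strip p (1 : ℂ[X]) = 1 := by
  have h := strip_spec p (1 : ℂ[X])
  have : (1 : ℂ[X]).rootMultiplicity p = 0 := by
    apply rootMultiplicity_eq_zero; simp [IsRoot]
  rw [this, pow_zero, one_mul] at h
  exact h

lemma leadAt_ne_zero (p : ℂ) {h : RatFunc ℂ} (hh : h ≠ 0) : leadAt p h ≠ 0 :=
  div_ne_zero (strip_eval_ne_zero p (RatFunc.num_ne_zero hh))
    (strip_eval_ne_zero p h.denom_ne_zero)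

/-- Stripped multiplication evaluates multiplicatively. -/
lemma strip_eval_mul (p : ℂ) {P Q : ℂ[X]} (hP : P ≠ 0) (hQ : Q ≠ 0) :
    (strip p (P * Q)).eval p = (strip p P).eval p * (strip p Q).eval p := by
  have hrm : (P * Q).rootMultiplicity p = P.rootMultiplicity p + Q.rootMultiplicity p :=
    rootMultiplicity_mul (mul_ne_zero hP hQ)
  have key : (X - C p) ^ ((P*Q).rootMultiplicity p) * strip p (P * Q)
      = (X - C p) ^ ((P*Q).rootMultiplicity p) * (strip p P * strip p Q) := by
    rw [strip_spec, hrm, pow_add]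
    calc P * Q = ((X - C p) ^ (P.rootMultiplicity p) * strip p P) *
        ((X - C p) ^ (Q.rootMultiplicity p) * strip p Q) := by rw [strip_spec, strip_spec]
      _ = _ := by ring
  have hc : strip p (P * Q) = strip p P * strip p Q :=
    mul_left_cancel₀ (pow_ne_zero _ (X_sub_C_ne_zero p)) key
  rw [hc, eval_mul]

lemma eval₂_id' (P : ℂ[X]) (p : ℂ) : P.eval₂ (RingHom.id ℂ) p = P.eval p := rfl

/-- From a representation `f = A / B`, the crossed equation. -/
lemma repr_cross {f : RatFunc ℂ} {A B : ℂ[X]} (hB : B ≠ 0)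
    (h : f = algebraMap ℂ[X] (RatFunc ℂ) A / algebraMap ℂ[X] (RatFunc ℂ) B) :
    f.num * B = A * f.denom :=
  (RatFunc.num_mul_eq_mul_denom_iff hB).mpr h

lemma repr_ne_zero {f : RatFunc ℂ} {A B : ℂ[X]} (hA : A ≠ 0) (hB : B ≠ 0)
    (h : f = algebraMap ℂ[X] (RatFunc ℂ) A / algebraMap ℂ[X] (RatFunc ℂ) B) :
    f ≠ 0 := by
  rw [h]
  exact div_ne_zero (RatFunc.algebraMap_ne_zero hA) (RatFunc.algebraMap_ne_zero hB)

lemma ordAt_repr (p : ℂ) {f : RatFunc ℂ} {A B : ℂ[X]} (hA : A ≠ 0) (hB : B ≠ 0)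
    (h : f = algebraMap ℂ[X] (RatFunc ℂ) A / algebraMap ℂ[X] (RatFunc ℂ) B) :
    ordAt p f = (A.rootMultiplicity p : ℤ) - (B.rootMultiplicity p : ℤ) := by
  have hf : f ≠ 0 := repr_ne_zero hA hB h
  have hc := repr_cross hB h
  have h1 : (f.num * B).rootMultiplicity p = (A * f.denom).rootMultiplicity p := by rw [hc]
  rw [rootMultiplicity_mul (mul_ne_zero (RatFunc.num_ne_zero hf) hB),
    rootMultiplicity_mul (mul_ne_zero hA f.denom_ne_zero)] at h1
  unfold ordAt
  omega

lemma leadAt_repr (p : ℂ) {f : RatFunc ℂ} {A B : ℂ[X]} (hA : A ≠ 0) (hB : B ≠ 0)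
    (h : f = algebraMap ℂ[X] (RatFunc ℂ) A / algebraMap ℂ[X] (RatFunc ℂ) B) :
    leadAt p f = (strip p A).eval p / (strip p B).eval p := by
  have hf : f ≠ 0 := repr_ne_zero hA hB h
  have hc := repr_cross hB h
  have h1 : (strip p (f.num * B)).eval p = (strip p (A * f.denom)).eval p := by rw [hc]
  rw [strip_eval_mul p (RatFunc.num_ne_zero hf) hB,
    strip_eval_mul p hA f.denom_ne_zero] at h1
  unfold leadAt
  rw [div_eq_div_iff (strip_eval_ne_zero p f.denom_ne_zero) (strip_eval_ne_zero p hB)]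
  linear_combination h1

lemma ordInf_repr {f : RatFunc ℂ} {A B : ℂ[X]} (hA : A ≠ 0) (hB : B ≠ 0)
    (h : f = algebraMap ℂ[X] (RatFunc ℂ) A / algebraMap ℂ[X] (RatFunc ℂ) B) :
    ordInf f = (B.natDegree : ℤ) - (A.natDegree : ℤ) := by
  have hf : f ≠ 0 := repr_ne_zero hA hB h
  have hc := repr_cross hB h
  have h1 : (f.num * B).natDegree = (A * f.denom).natDegree := by rw [hc]
  rw [natDegree_mul (RatFunc.num_ne_zero hf) hB, natDegree_mul hA f.denom_ne_zero] at h1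
  unfold ordInf
  omega

lemma evalInf_repr {f : RatFunc ℂ} {A B : ℂ[X]} (hA : A ≠ 0) (hB : B ≠ 0)
    (h : f = algebraMap ℂ[X] (RatFunc ℂ) A / algebraMap ℂ[X] (RatFunc ℂ) B) :
    evalInf f = A.leadingCoeff / B.leadingCoeff := by
  have hf : f ≠ 0 := repr_ne_zero hA hB h
  have hc := repr_cross hB h
  have h1 : (f.num * B).leadingCoeff = (A * f.denom).leadingCoeff := by rw [hc]
  rw [leadingCoeff_mul, leadingCoeff_mul] at h1
  unfold evalInf
  rw [div_eq_div_iff (leadingCoeff_ne_zero.2 f.denom_ne_zero) (leadingCoeff_ne_zero.2 hB)]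
  linear_combination h1

lemma eval_repr (p : ℂ) {f : RatFunc ℂ} {A B : ℂ[X]} (hB : B ≠ 0) (hBp : B.eval p ≠ 0)
    (h : f = algebraMap ℂ[X] (RatFunc ℂ) A / algebraMap ℂ[X] (RatFunc ℂ) B) :
    RatFunc.eval (RingHom.id ℂ) p f = A.eval p / B.eval p := by
  have hdvd : f.denom ∣ B := (RatFunc.denom_dvd hB).mpr ⟨A, h⟩
  have hdp : f.denom.eval p ≠ 0 := by
    obtain ⟨q, hq⟩ := hdvd
    intro h0
    apply hBp
    rw [hq, eval_mul, h0, zero_mul]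
  have hc := repr_cross hB h
  have h1 : (f.num * B).eval p = (A * f.denom).eval p := by rw [hc]
  rw [eval_mul, eval_mul] at h1
  rw [RatFunc.eval, eval₂_id', eval₂_id',
    div_eq_div_iff hdp hBp]
  linear_combination h1

/-- Representation of a mixed zpow expression as a ratio of polynomials. -/
lemma zpow_repr {f g : RatFunc ℂ} {Nf Df Ng Dg : ℂ[X]}
    (hNf : Nf ≠ 0) (hDf : Df ≠ 0) (hNg : Ng ≠ 0) (hDg : Dg ≠ 0)
    (hfr : f = algebraMap ℂ[X] (RatFunc ℂ) Nf / algebraMap ℂ[X] (RatFunc ℂ) Df)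
    (hgr : g = algebraMap ℂ[X] (RatFunc ℂ) Ng / algebraMap ℂ[X] (RatFunc ℂ) Dg)
    (s t u v : ℕ) :
    f ^ ((s : ℤ) - t) * g ^ ((u : ℤ) - v) =
      algebraMap ℂ[X] (RatFunc ℂ) (Nf ^ s * Df ^ t * Ng ^ u * Dg ^ v) /
      algebraMap ℂ[X] (RatFunc ℂ) (Nf ^ t * Df ^ s * Ng ^ v * Dg ^ u) := by
  subst hfr hgr
  have hNf' : algebraMap ℂ[X] (RatFunc ℂ) Nf ≠ 0 := RatFunc.algebraMap_ne_zero hNf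
  have hDf' : algebraMap ℂ[X] (RatFunc ℂ) Df ≠ 0 := RatFunc.algebraMap_ne_zero hDf
  have hNg' : algebraMap ℂ[X] (RatFunc ℂ) Ng ≠ 0 := RatFunc.algebraMap_ne_zero hNg
  have hDg' : algebraMap ℂ[X] (RatFunc ℂ) Dg ≠ 0 := RatFunc.algebraMap_ne_zero hDg
  rw [zpow_sub₀ (div_ne_zero hNf' hDf'), zpow_sub₀ (div_ne_zero hNg' hDg'),
    zpow_natCast, zpow_natCast, zpow_natCast, zpow_natCast]
  simp only [map_mul, map_pow, div_pow]
  rw [div_div_div_comm, div_mul_div_comm]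
  rw [div_eq_div_iff
    (by simp [pow_ne_zero, div_ne_zero, mul_ne_zero, hNf', hDf', hNg', hDg'])
    (by simp [pow_ne_zero, mul_ne_zero, hNf', hDf', hNg', hDg'])]
  field_simp

lemma quot_helper {α β γ δ : ℂ} (hα : α ≠ 0) (hβ : β ≠ 0) (hγ : γ ≠ 0) (hδ : δ ≠ 0)
    (a b c d : ℕ) :
    (α ^ c * β ^ d * γ ^ b * δ ^ a) / (α ^ d * β ^ c * γ ^ a * δ ^ b)
      = (α / β) ^ ((c : ℤ) - d) * ((γ / δ) ^ ((a : ℤ) - b))⁻¹ := by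
  rw [zpow_sub₀ (div_ne_zero hα hβ), zpow_sub₀ (div_ne_zero hγ hδ),
    zpow_natCast, zpow_natCast, zpow_natCast, zpow_natCast, div_pow, div_pow, div_pow, div_pow,
    ← div_eq_mul_inv]
  rw [div_eq_div_iff (by simp [pow_ne_zero, mul_ne_zero, hα, hβ, hγ, hδ])
    (by simp [pow_ne_zero, div_ne_zero, mul_ne_zero, hα, hβ, hγ, hδ])]
  field_simp

/-- Closed form for the tame symbol at a finite place. -/
lemma tameSymbolAt_closed (p : ℂ) {f g : RatFunc ℂ} (hf : f ≠ 0) (hg : g ≠ 0) :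
    tameSymbolAt p f g = (-1 : ℂ) ^ (ordAt p f * ordAt p g) *
      (leadAt p f ^ (ordAt p g) * (leadAt p g ^ (ordAt p f))⁻¹) := by
  set a := f.num.rootMultiplicity p with ha
  set b := f.denom.rootMultiplicity p with hb
  set c := g.num.rootMultiplicity p with hc
  set d := g.denom.rootMultiplicity p with hd
  have hm : ordAt p f = (a : ℤ) - b := rfl
  have hn : ordAt p g = (c : ℤ) - d := rfl
  have hNf : f.num ≠ 0 := RatFunc.num_ne_zero hf
  have hDf : f.denom ≠ 0 := f.denom_ne_zero
  have hNg : g.num ≠ 0 := RatFunc.num_ne_zero hg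
  have hDg : g.denom ≠ 0 := g.denom_ne_zero
  -- the rational function to be evaluated
  have hdiv : f ^ (ordAt p g) / g ^ (ordAt p f) = f ^ ((c : ℤ) - d) * g ^ ((b : ℤ) - a) := by
    rw [hm, hn, div_eq_mul_inv, ← zpow_neg, neg_sub]
  have hrepr := zpow_repr hNf hDf hNg hDg (RatFunc.num_div_denom f).symm
    (RatFunc.num_div_denom g).symm c d b a
  -- strip off powers of (X - C p)
  have hNeq : f.num ^ c * f.denom ^ d * g.num ^ b * g.denom ^ a
      = (X - C p) ^ (a*c + b*d + c*b + d*a) *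
        ((strip p f.num) ^ c * (strip p f.denom) ^ d * (strip p g.num) ^ b *
          (strip p g.denom) ^ a) := by
    conv_lhs => rw [← strip_spec p f.num, ← strip_spec p f.denom, ← strip_spec p g.num,
      ← strip_spec p g.denom]
    rw [← ha, ← hb, ← hc, ← hd]
    ring
  have hDeq : f.num ^ d * f.denom ^ c * g.num ^ a * g.denom ^ b
      = (X - C p) ^ (a*c + b*d + c*b + d*a) *
        ((strip p f.num) ^ d * (strip p f.denom) ^ c * (strip p g.num) ^ a *
          (strip p g.denom) ^ b) := by
    conv_lhs => rw [← strip_spec p f.num, ← strip_spec p f.denom, ← strip_spec p g.num,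
      ← strip_spec p g.denom]
    rw [← ha, ← hb, ← hc, ← hd]
    ring
  have hcan : ∀ (N D : ℂ[X]) (k : ℕ),
      algebraMap ℂ[X] (RatFunc ℂ) ((X - C p) ^ k * N) /
        algebraMap ℂ[X] (RatFunc ℂ) ((X - C p) ^ k * D) =
      algebraMap ℂ[X] (RatFunc ℂ) N / algebraMap ℂ[X] (RatFunc ℂ) D := by
    intro N D k
    rw [map_mul, map_mul, mul_div_mul_left _ _ (RatFunc.algebraMap_ne_zero
      (pow_ne_zero _ (X_sub_C_ne_zero p)))]
  rw [hNeq, hDeq, hcan] at hrepr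
  -- nonvanishing of stripped parts at p
  have sNf := strip_eval_ne_zero p hNf
  have sDf := strip_eval_ne_zero p hDf
  have sNg := strip_eval_ne_zero p hNg
  have sDg := strip_eval_ne_zero p hDg
  have hDval : ((strip p f.num) ^ d * (strip p f.denom) ^ c * (strip p g.num) ^ a *
      (strip p g.denom) ^ b).eval p ≠ 0 := by
    simp only [eval_mul, eval_pow]
    exact mul_ne_zero (mul_ne_zero (mul_ne_zero (pow_ne_zero _ sNf) (pow_ne_zero _ sDf))
      (pow_ne_zero _ sNg)) (pow_ne_zero _ sDg)
  have hDne : (strip p f.num) ^ d * (strip p f.denom) ^ c * (strip p g.num) ^ a *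
      (strip p g.denom) ^ b ≠ 0 := fun h0 => hDval (by rw [h0]; simp)
  have heval := eval_repr p hDne hDval (hdiv.trans hrepr)
  rw [tameSymbolAt, heval]
  simp only [eval_mul, eval_pow]
  rw [quot_helper sNf sDf sNg sDg a b c d]
  rw [leadAt, leadAt, hm, hn]

/-- Closed form for the tame symbol at infinity. -/
lemma tameSymbolInf_closed {f g : RatFunc ℂ} (hf : f ≠ 0) (hg : g ≠ 0) :
    tameSymbolInf f g = (-1 : ℂ) ^ (ordInf f * ordInf g) *
      (evalInf f ^ (ordInf g) * (evalInf g ^ (ordInf f))⁻¹) := by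
  set a := f.num.natDegree with ha
  set b := f.denom.natDegree with hb
  set c := g.num.natDegree with hc
  set d := g.denom.natDegree with hd
  have hm : ordInf f = (b : ℤ) - a := rfl
  have hn : ordInf g = (d : ℤ) - c := rfl
  have hNf : f.num ≠ 0 := RatFunc.num_ne_zero hf
  have hDf : f.denom ≠ 0 := f.denom_ne_zero
  have hNg : g.num ≠ 0 := RatFunc.num_ne_zero hg
  have hDg : g.denom ≠ 0 := g.denom_ne_zero
  have hdiv : f ^ (ordInf g) / g ^ (ordInf f) = f ^ ((d : ℤ) - c) * g ^ ((a : ℤ) - b) := by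
    rw [hm, hn, div_eq_mul_inv, ← zpow_neg, neg_sub]
  have hrepr := zpow_repr hNf hDf hNg hDg (RatFunc.num_div_denom f).symm
    (RatFunc.num_div_denom g).symm d c a b
  have hNne : f.num ^ d * f.denom ^ c * g.num ^ a * g.denom ^ b ≠ 0 :=
    mul_ne_zero (mul_ne_zero (mul_ne_zero (pow_ne_zero _ hNf) (pow_ne_zero _ hDf))
      (pow_ne_zero _ hNg)) (pow_ne_zero _ hDg)
  have hDne : f.num ^ c * f.denom ^ d * g.num ^ b * g.denom ^ a ≠ 0 :=
    mul_ne_zero (mul_ne_zero (mul_ne_zero (pow_ne_zero _ hNf) (pow_ne_zero _ hDf))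
      (pow_ne_zero _ hNg)) (pow_ne_zero _ hDg)
  have heval := evalInf_repr hNne hDne (hdiv.trans hrepr)
  rw [tameSymbolInf, heval]
  simp only [leadingCoeff_mul, leadingCoeff_pow]
  have lNf := leadingCoeff_ne_zero.2 hNf
  have lDf := leadingCoeff_ne_zero.2 hDf
  have lNg := leadingCoeff_ne_zero.2 hNg
  have lDg := leadingCoeff_ne_zero.2 hDg
  rw [quot_helper lNf lDf lNg lDg b a d c]
  rw [evalInf, evalInf, hm, hn]

lemma evalInf_ne_zero {f : RatFunc ℂ} (hf : f ≠ 0) : evalInf f ≠ 0 :=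
  div_ne_zero (leadingCoeff_ne_zero.2 (RatFunc.num_ne_zero hf))
    (leadingCoeff_ne_zero.2 f.denom_ne_zero)

/-- Representation of a product. -/
lemma mul_repr (f g : RatFunc ℂ) :
    f * g = algebraMap ℂ[X] (RatFunc ℂ) (f.num * g.num) /
      algebraMap ℂ[X] (RatFunc ℂ) (f.denom * g.denom) := by
  rw [map_mul, map_mul, ← div_mul_div_comm, RatFunc.num_div_denom, RatFunc.num_div_denom]

lemma ordAt_mul (p : ℂ) {f g : RatFunc ℂ} (hf : f ≠ 0) (hg : g ≠ 0) :
    ordAt p (f * g) = ordAt p f + ordAt p g := by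
  rw [ordAt_repr p (mul_ne_zero (RatFunc.num_ne_zero hf) (RatFunc.num_ne_zero hg))
    (mul_ne_zero f.denom_ne_zero g.denom_ne_zero) (mul_repr f g),
    rootMultiplicity_mul (mul_ne_zero (RatFunc.num_ne_zero hf) (RatFunc.num_ne_zero hg)),
    rootMultiplicity_mul (mul_ne_zero f.denom_ne_zero g.denom_ne_zero)]
  unfold ordAt
  push_cast
  ring

lemma leadAt_mul (p : ℂ) {f g : RatFunc ℂ} (hf : f ≠ 0) (hg : g ≠ 0) :
    leadAt p (f * g) = leadAt p f * leadAt p g := by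
  rw [leadAt_repr p (mul_ne_zero (RatFunc.num_ne_zero hf) (RatFunc.num_ne_zero hg))
    (mul_ne_zero f.denom_ne_zero g.denom_ne_zero) (mul_repr f g),
    strip_eval_mul p (RatFunc.num_ne_zero hf) (RatFunc.num_ne_zero hg),
    strip_eval_mul p f.denom_ne_zero g.denom_ne_zero]
  rw [leadAt, leadAt, div_mul_div_comm]

lemma ordInf_mul {f g : RatFunc ℂ} (hf : f ≠ 0) (hg : g ≠ 0) :
    ordInf (f * g) = ordInf f + ordInf g := by
  rw [ordInf_repr (mul_ne_zero (RatFunc.num_ne_zero hf) (RatFunc.num_ne_zero hg))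
    (mul_ne_zero f.denom_ne_zero g.denom_ne_zero) (mul_repr f g),
    natDegree_mul (RatFunc.num_ne_zero hf) (RatFunc.num_ne_zero hg),
    natDegree_mul f.denom_ne_zero g.denom_ne_zero]
  unfold ordInf
  push_cast
  ring

lemma evalInf_mul {f g : RatFunc ℂ} (hf : f ≠ 0) (hg : g ≠ 0) :
    evalInf (f * g) = evalInf f * evalInf g := by
  rw [evalInf_repr (mul_ne_zero (RatFunc.num_ne_zero hf) (RatFunc.num_ne_zero hg))
    (mul_ne_zero f.denom_ne_zero g.denom_ne_zero) (mul_repr f g),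
    leadingCoeff_mul, leadingCoeff_mul]
  rw [evalInf, evalInf, div_mul_div_comm]

/-- Algebraic helper for multiplicativity of symbols. -/
lemma symb_alg {lf lf' lg : ℂ} (hlg : lg ≠ 0) (m m' n : ℤ) :
    (-1 : ℂ) ^ ((m + m') * n) * ((lf * lf') ^ n * (lg ^ (m + m'))⁻¹)
      = ((-1 : ℂ) ^ (m * n) * (lf ^ n * (lg ^ m)⁻¹)) *
        ((-1 : ℂ) ^ (m' * n) * (lf' ^ n * (lg ^ m')⁻¹)) := by
  rw [add_mul, zpow_add₀ (by norm_num : (-1 : ℂ) ≠ 0), mul_zpow, zpow_add₀ hlg, mul_inv]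
  ring

/-- Algebraic helper for antisymmetry. -/
lemma antisym_alg {lf lg : ℂ} (hlf : lf ≠ 0) (hlg : lg ≠ 0) (m n : ℤ) :
    ((-1 : ℂ) ^ (m * n) * (lf ^ n * (lg ^ m)⁻¹)) *
      ((-1 : ℂ) ^ (n * m) * (lg ^ m * (lf ^ n)⁻¹)) = 1 := by
  have h1 : lf ^ n ≠ 0 := zpow_ne_zero _ hlf
  have h2 : lg ^ m ≠ 0 := zpow_ne_zero _ hlg
  have h3 : (-1 : ℂ) ^ (m * n) * (-1 : ℂ) ^ (n * m) = 1 := by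
    rw [← zpow_add₀ (by norm_num : (-1 : ℂ) ≠ 0), show m * n + n * m = 2 * (m * n) by ring,
      zpow_mul]
    norm_num
  calc ((-1 : ℂ) ^ (m * n) * (lf ^ n * (lg ^ m)⁻¹)) *
      ((-1 : ℂ) ^ (n * m) * (lg ^ m * (lf ^ n)⁻¹))
      = ((-1 : ℂ) ^ (m * n) * (-1 : ℂ) ^ (n * m)) *
        ((lf ^ n * (lf ^ n)⁻¹) * (lg ^ m * (lg ^ m)⁻¹)) := by ring
    _ = 1 := by rw [h3, mul_inv_cancel₀ h1, mul_inv_cancel₀ h2]; ring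

lemma tameSymbolAt_mul_left (p : ℂ) {f f' g : RatFunc ℂ}
    (hf : f ≠ 0) (hf' : f' ≠ 0) (hg : g ≠ 0) :
    tameSymbolAt p (f * f') g = tameSymbolAt p f g * tameSymbolAt p f' g := by
  rw [tameSymbolAt_closed p (mul_ne_zero hf hf') hg, tameSymbolAt_closed p hf hg,
    tameSymbolAt_closed p hf' hg, ordAt_mul p hf hf', leadAt_mul p hf hf']
  exact symb_alg (leadAt_ne_zero p hg) _ _ _

lemma tameSymbolInf_mul_left {f f' g : RatFunc ℂ}
    (hf : f ≠ 0) (hf' : f' ≠ 0) (hg : g ≠ 0) :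
    tameSymbolInf (f * f') g = tameSymbolInf f g * tameSymbolInf f' g := by
  rw [tameSymbolInf_closed (mul_ne_zero hf hf') hg, tameSymbolInf_closed hf hg,
    tameSymbolInf_closed hf' hg, ordInf_mul hf hf', evalInf_mul hf hf']
  exact symb_alg (evalInf_ne_zero hg) _ _ _

lemma tameSymbolAt_antisym (p : ℂ) {f g : RatFunc ℂ} (hf : f ≠ 0) (hg : g ≠ 0) :
    tameSymbolAt p f g * tameSymbolAt p g f = 1 := by
  rw [tameSymbolAt_closed p hf hg, tameSymbolAt_closed p hg hf]
  exact antisym_alg (leadAt_ne_zero p hf) (leadAt_ne_zero p hg) _ _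

lemma tameSymbolInf_antisym {f g : RatFunc ℂ} (hf : f ≠ 0) (hg : g ≠ 0) :
    tameSymbolInf f g * tameSymbolInf g f = 1 := by
  rw [tameSymbolInf_closed hf hg, tameSymbolInf_closed hg hf]
  exact antisym_alg (evalInf_ne_zero hf) (evalInf_ne_zero hg) _ _

lemma tameSymbolAt_eq_one_of_ord {p : ℂ} {f g : RatFunc ℂ}
    (h1 : ordAt p f = 0) (h2 : ordAt p g = 0) : tameSymbolAt p f g = 1 := by
  rw [tameSymbolAt, h1, h2]
  simp

lemma support_subset {f g : RatFunc ℂ} (hf : f ≠ 0) (hg : g ≠ 0) :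
    {p : ℂ | tameSymbolAt p f g ≠ 1} ⊆
      ((f.num * f.denom * g.num * g.denom).roots.toFinset : Set ℂ) := by
  intro p hp
  by_contra hmem
  apply hp
  have hprod : f.num * f.denom * g.num * g.denom ≠ 0 :=
    mul_ne_zero (mul_ne_zero (mul_ne_zero (RatFunc.num_ne_zero hf) f.denom_ne_zero)
      (RatFunc.num_ne_zero hg)) g.denom_ne_zero
  have hnr : ¬ (f.num * f.denom * g.num * g.denom).IsRoot p := by
    intro hr
    exact hmem (Finset.mem_coe.mpr (Multiset.mem_toFinset.mpr (mem_roots'.mpr ⟨hprod, hr⟩)))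
  have h1 : ¬ f.num.IsRoot p := fun h => hnr (by simp [IsRoot, eval_mul, h.eq_zero])
  have h2 : ¬ f.denom.IsRoot p := fun h => hnr (by simp [IsRoot, eval_mul, h.eq_zero])
  have h3 : ¬ g.num.IsRoot p := fun h => hnr (by simp [IsRoot, eval_mul, h.eq_zero])
  have h4 : ¬ g.denom.IsRoot p := fun h => hnr (by simp [IsRoot, eval_mul, h.eq_zero])
  exact tameSymbolAt_eq_one_of_ord
    (by rw [ordAt, rootMultiplicity_eq_zero h1, rootMultiplicity_eq_zero h2]; ring)
    (by rw [ordAt, rootMultiplicity_eq_zero h3, rootMultiplicity_eq_zero h4]; ring)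

lemma support_finite {f g : RatFunc ℂ} (hf : f ≠ 0) (hg : g ≠ 0) :
    {p : ℂ | tameSymbolAt p f g ≠ 1}.Finite :=
  Set.Finite.subset ((f.num * f.denom * g.num * g.denom).roots.toFinset).finite_toSet
    (support_subset hf hg)

lemma mulSupport_finite {f g : RatFunc ℂ} (hf : f ≠ 0) (hg : g ≠ 0) :
    (Function.mulSupport fun p => tameSymbolAt p f g).Finite :=
  support_finite hf hg

/-- The global symbol: product of all local tame symbols. -/
noncomputable def Phi (f g : RatFunc ℂ) : ℂ :=
  (∏ᶠ p : ℂ, tameSymbolAt p f g) * tameSymbolInf f g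

lemma Phi_mul_left {f f' g : RatFunc ℂ} (hf : f ≠ 0) (hf' : f' ≠ 0) (hg : g ≠ 0) :
    Phi (f * f') g = Phi f g * Phi f' g := by
  unfold Phi
  have h1 : (∏ᶠ p : ℂ, tameSymbolAt p (f * f') g)
      = (∏ᶠ p : ℂ, tameSymbolAt p f g) * (∏ᶠ p : ℂ, tameSymbolAt p f' g) := by
    rw [← finprod_mul_distrib (mulSupport_finite hf hg) (mulSupport_finite hf' hg)]
    exact finprod_congr fun p => tameSymbolAt_mul_left p hf hf' hg
  rw [h1, tameSymbolInf_mul_left hf hf' hg]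
  ring

lemma Phi_antisym {f g : RatFunc ℂ} (hf : f ≠ 0) (hg : g ≠ 0) :
    Phi f g * Phi g f = 1 := by
  unfold Phi
  have h1 : (∏ᶠ p : ℂ, tameSymbolAt p f g) * (∏ᶠ p : ℂ, tameSymbolAt p g f)
      = ∏ᶠ p : ℂ, (tameSymbolAt p f g * tameSymbolAt p g f) :=
    (finprod_mul_distrib (mulSupport_finite hf hg) (mulSupport_finite hg hf)).symm
  have h2 : (∏ᶠ p : ℂ, (tameSymbolAt p f g * tameSymbolAt p g f)) = 1 := by
    rw [finprod_congr fun p => tameSymbolAt_antisym p hf hg]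
    exact finprod_one
  calc (∏ᶠ p : ℂ, tameSymbolAt p f g) * tameSymbolInf f g *
      ((∏ᶠ p : ℂ, tameSymbolAt p g f) * tameSymbolInf g f)
      = ((∏ᶠ p : ℂ, tameSymbolAt p f g) * (∏ᶠ p : ℂ, tameSymbolAt p g f)) *
        (tameSymbolInf f g * tameSymbolInf g f) := by ring
    _ = 1 := by rw [h1, h2, tameSymbolInf_antisym hf hg, one_mul]

/-! ### Values on generators -/

lemma strip_of_rm_zero {p : ℂ} {P : ℂ[X]} (h : P.rootMultiplicity p = 0) : strip p P = P := by
  rw [strip, h, pow_zero, divByMonic_one]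

@[simp] lemma ordAt_C (p c : ℂ) : ordAt p (RatFunc.C c) = 0 := by
  rw [ordAt, RatFunc.num_C, RatFunc.denom_C, rootMultiplicity_C]
  have : (1 : ℂ[X]).rootMultiplicity p = 0 := by
    rw [← Polynomial.C_1, rootMultiplicity_C]
  rw [this]
  ring

lemma leadAt_C (p c : ℂ) : leadAt p (RatFunc.C c) = c := by
  rw [leadAt, RatFunc.num_C, RatFunc.denom_C,
    strip_of_rm_zero (rootMultiplicity_C c p),
    strip_of_rm_zero (by rw [← Polynomial.C_1]; exact rootMultiplicity_C 1 p)]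
  simp

@[simp] lemma ordInf_C (c : ℂ) : ordInf (RatFunc.C c) = 0 := by
  rw [ordInf, RatFunc.num_C, RatFunc.denom_C]
  simp

lemma evalInf_C (c : ℂ) : evalInf (RatFunc.C c) = c := by
  rw [evalInf, RatFunc.num_C, RatFunc.denom_C]
  simp

/-- The linear rational function `X - a`. -/
noncomputable def lin (a : ℂ) : RatFunc ℂ := algebraMap ℂ[X] (RatFunc ℂ) (X - C a)

lemma lin_ne_zero (a : ℂ) : lin a ≠ 0 :=
  RatFunc.algebraMap_ne_zero (X_sub_C_ne_zero a)

@[simp] lemma num_lin (a : ℂ) : (lin a).num = X - C a := RatFunc.num_algebraMap _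
@[simp] lemma denom_lin (a : ℂ) : (lin a).denom = 1 := RatFunc.denom_algebraMap _

lemma rm_one_eq_zero (p : ℂ) : (1 : ℂ[X]).rootMultiplicity p = 0 := by
  rw [← Polynomial.C_1]; exact rootMultiplicity_C 1 p

lemma ordAt_lin_self (a : ℂ) : ordAt a (lin a) = 1 := by
  rw [ordAt, num_lin, denom_lin, rootMultiplicity_X_sub_C_self, rm_one_eq_zero]
  ring

lemma ordAt_lin_ne {p a : ℂ} (h : p ≠ a) : ordAt p (lin a) = 0 := by
  rw [ordAt, num_lin, denom_lin, rm_one_eq_zero,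
    rootMultiplicity_eq_zero (by rw [root_X_sub_C]; exact h.symm)]
  ring

lemma leadAt_lin_self (a : ℂ) : leadAt a (lin a) = 1 := by
  have hrm : (X - C a).rootMultiplicity a = 1 := rootMultiplicity_X_sub_C_self
  have hs : strip a (X - C a) = 1 := by
    have := strip_spec a (X - C a)
    rw [hrm, pow_one] at this
    have h2 : (X - C a) * strip a (X - C a) = (X - C a) * 1 := by rw [mul_one, this]
    exact mul_left_cancel₀ (X_sub_C_ne_zero a) h2
  rw [leadAt, num_lin, denom_lin, hs, strip_of_rm_zero (rm_one_eq_zero a)]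
  simp

lemma leadAt_lin_ne {p a : ℂ} (h : p ≠ a) : leadAt p (lin a) = p - a := by
  rw [leadAt, num_lin, denom_lin,
    strip_of_rm_zero (rootMultiplicity_eq_zero (by rw [root_X_sub_C]; exact h.symm)),
    strip_of_rm_zero (rm_one_eq_zero p)]
  simp

lemma ordInf_lin (a : ℂ) : ordInf (lin a) = -1 := by
  rw [ordInf, num_lin, denom_lin, natDegree_X_sub_C, natDegree_one]
  ring

lemma evalInf_lin (a : ℂ) : evalInf (lin a) = 1 := by
  rw [evalInf, num_lin, denom_lin, leadingCoeff_one, (monic_X_sub_C a).leadingCoeff]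
  simp

lemma RatFunc_C_ne_zero {c : ℂ} (hc : c ≠ 0) : RatFunc.C c ≠ 0 :=
  RatFunc.algebraMap_C c ▸ RatFunc.algebraMap_ne_zero (Polynomial.C_ne_zero.mpr hc)

lemma Phi_C_C {c c' : ℂ} (hc : c ≠ 0) (hc' : c' ≠ 0) :
    Phi (RatFunc.C c) (RatFunc.C c') = 1 := by
  unfold Phi
  have h1 : (∏ᶠ p : ℂ, tameSymbolAt p (RatFunc.C c) (RatFunc.C c')) = 1 := by
    rw [finprod_congr fun p => tameSymbolAt_eq_one_of_ord (ordAt_C p c) (ordAt_C p c')]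
    exact finprod_one
  have h2 : tameSymbolInf (RatFunc.C c) (RatFunc.C c') = 1 := by
    rw [tameSymbolInf_closed (RatFunc_C_ne_zero hc) (RatFunc_C_ne_zero hc'),
      ordInf_C, ordInf_C]
    simp
  rw [h1, h2, one_mul]

lemma Phi_C_lin {c : ℂ} (hc : c ≠ 0) (b : ℂ) : Phi (RatFunc.C c) (lin b) = 1 := by
  unfold Phi
  have h1 : (∏ᶠ p : ℂ, tameSymbolAt p (RatFunc.C c) (lin b)) = c := by
    rw [finprod_eq_single _ b
      (fun p hp => tameSymbolAt_eq_one_of_ord (ordAt_C p c) (ordAt_lin_ne hp))]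
    rw [tameSymbolAt_closed b (RatFunc_C_ne_zero hc) (lin_ne_zero b),
      ordAt_C, ordAt_lin_self, leadAt_C]
    simp
  have h2 : tameSymbolInf (RatFunc.C c) (lin b) = c⁻¹ := by
    rw [tameSymbolInf_closed (RatFunc_C_ne_zero hc) (lin_ne_zero b),
      ordInf_C, ordInf_lin, evalInf_C]
    simp
  rw [h1, h2, mul_inv_cancel₀ hc]

lemma Phi_lin_C {c : ℂ} (hc : c ≠ 0) (a : ℂ) : Phi (lin a) (RatFunc.C c) = 1 := by
  unfold Phi
  have h1 : (∏ᶠ p : ℂ, tameSymbolAt p (lin a) (RatFunc.C c)) = c⁻¹ := by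
    rw [finprod_eq_single _ a
      (fun p hp => tameSymbolAt_eq_one_of_ord (ordAt_lin_ne hp) (ordAt_C p c))]
    rw [tameSymbolAt_closed a (lin_ne_zero a) (RatFunc_C_ne_zero hc),
      ordAt_C, ordAt_lin_self, leadAt_C]
    simp
  have h2 : tameSymbolInf (lin a) (RatFunc.C c) = c := by
    rw [tameSymbolInf_closed (lin_ne_zero a) (RatFunc_C_ne_zero hc),
      ordInf_C, ordInf_lin, evalInf_C]
    simp
  rw [h1, h2, inv_mul_cancel₀ hc]

lemma tameSymbolInf_lin_lin (a b : ℂ) : tameSymbolInf (lin a) (lin b) = -1 := by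
  rw [tameSymbolInf_closed (lin_ne_zero a) (lin_ne_zero b), ordInf_lin, ordInf_lin,
    evalInf_lin, evalInf_lin]
  norm_num

lemma Phi_lin_lin (a b : ℂ) : Phi (lin a) (lin b) = 1 := by
  unfold Phi
  by_cases hab : a = b
  · subst hab
    have h1 : (∏ᶠ p : ℂ, tameSymbolAt p (lin a) (lin a)) = -1 := by
      rw [finprod_eq_single _ a
        (fun p hp => tameSymbolAt_eq_one_of_ord (ordAt_lin_ne hp) (ordAt_lin_ne hp))]
      rw [tameSymbolAt_closed a (lin_ne_zero a) (lin_ne_zero a),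
        ordAt_lin_self, leadAt_lin_self]
      norm_num
    rw [h1, tameSymbolInf_lin_lin]
    norm_num
  · have hsup : (Function.mulSupport fun p => tameSymbolAt p (lin a) (lin b)) ⊆
        (({a, b} : Finset ℂ) : Set ℂ) := by
      intro p hp
      by_contra hmem
      simp only [Finset.coe_insert, Finset.coe_singleton, Set.mem_insert_iff,
        Set.mem_singleton_iff, not_or] at hmem
      exact hp (tameSymbolAt_eq_one_of_ord (ordAt_lin_ne hmem.1) (ordAt_lin_ne hmem.2))
    have h1 : (∏ᶠ p : ℂ, tameSymbolAt p (lin a) (lin b)) = -1 := by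
      rw [finprod_eq_prod_of_mulSupport_subset _ hsup, Finset.prod_pair hab]
      have hA : tameSymbolAt a (lin a) (lin b) = (a - b)⁻¹ := by
        rw [tameSymbolAt_closed a (lin_ne_zero a) (lin_ne_zero b),
          ordAt_lin_self, ordAt_lin_ne hab, leadAt_lin_ne hab]
        simp
      have hB : tameSymbolAt b (lin a) (lin b) = b - a := by
        rw [tameSymbolAt_closed b (lin_ne_zero a) (lin_ne_zero b),
          ordAt_lin_self, ordAt_lin_ne (Ne.symm hab), leadAt_lin_ne (Ne.symm hab)]
        simp
      rw [hA, hB]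
      have hab' : a - b ≠ 0 := sub_ne_zero.mpr hab
      field_simp
      ring
    rw [h1, tameSymbolInf_lin_lin]
    norm_num

/-- If `Phi · g` is trivial on generators, it is trivial on all nonzero elements. -/
lemma Phi_right_gen {g : RatFunc ℂ} (hg : g ≠ 0)
    (hconst : ∀ c : ℂ, c ≠ 0 → Phi (RatFunc.C c) g = 1)
    (hlin : ∀ a : ℂ, Phi (lin a) g = 1) :
    ∀ f : RatFunc ℂ, f ≠ 0 → Phi f g = 1 := by
  have key : ∀ s : Multiset ℂ, ∀ c : ℂ, c ≠ 0 →
      Phi (algebraMap ℂ[X] (RatFunc ℂ)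
        (Polynomial.C c * (s.map fun a => X - C a).prod)) g = 1 := by
    intro s
    induction s using Multiset.induction_on with
    | empty =>
      intro c hc
      rw [Multiset.map_zero, Multiset.prod_zero, mul_one, RatFunc.algebraMap_C]
      exact hconst c hc
    | cons a s ih =>
      intro c hc
      have hre : Polynomial.C c * ((a ::ₘ s).map fun x => X - C x).prod
          = (X - C a) * (Polynomial.C c * (s.map fun x => X - C x).prod) := by
        rw [Multiset.map_cons, Multiset.prod_cons]
        ring
      have hsne : Polynomial.C c * (s.map fun x => X - C x).prod ≠ 0 := by
        refine mul_ne_zero (C_ne_zero.mpr hc) (Multiset.prod_ne_zero ?_)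
        intro h0
        obtain ⟨x, _, hx⟩ := Multiset.mem_map.mp h0
        exact X_sub_C_ne_zero x hx
      rw [hre, map_mul,
        Phi_mul_left (RatFunc.algebraMap_ne_zero (X_sub_C_ne_zero a))
          (RatFunc.algebraMap_ne_zero hsne) hg,
        ih c hc, mul_one]
      exact hlin a
  have hpoly : ∀ P : ℂ[X], P ≠ 0 → Phi (algebraMap ℂ[X] (RatFunc ℂ) P) g = 1 := by
    intro P hP
    have hfac := (IsAlgClosed.splits P).eq_prod_roots
    rw [show P = Polynomial.C P.leadingCoeff * (P.roots.map fun a => X - C a).prod from hfac]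
    exact key P.roots P.leadingCoeff (leadingCoeff_ne_zero.2 hP)
  intro f hf
  have hDne : algebraMap ℂ[X] (RatFunc ℂ) f.denom ≠ 0 :=
    RatFunc.algebraMap_ne_zero f.denom_ne_zero
  have hfd : f * algebraMap ℂ[X] (RatFunc ℂ) f.denom = algebraMap ℂ[X] (RatFunc ℂ) f.num :=
    ((div_eq_iff hDne).mp (RatFunc.num_div_denom f)).symm
  have h1 := Phi_mul_left hf hDne hg
  rw [hfd, hpoly f.num (RatFunc.num_ne_zero hf), hpoly f.denom f.denom_ne_zero, mul_one] at h1
  exact h1.symm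

lemma Phi_eq_one {f g : RatFunc ℂ} (hf : f ≠ 0) (hg : g ≠ 0) : Phi f g = 1 := by
  have s1C : ∀ c : ℂ, c ≠ 0 → ∀ f' : RatFunc ℂ, f' ≠ 0 → Phi f' (RatFunc.C c) = 1 :=
    fun c hc => Phi_right_gen (RatFunc_C_ne_zero hc)
      (fun c' hc' => Phi_C_C hc' hc) (fun a => Phi_lin_C hc a)
  have s1L : ∀ b : ℂ, ∀ f' : RatFunc ℂ, f' ≠ 0 → Phi f' (lin b) = 1 :=
    fun b => Phi_right_gen (lin_ne_zero b)
      (fun c' hc' => Phi_C_lin hc' b) (fun a => Phi_lin_lin a b)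
  have s2C : ∀ c : ℂ, c ≠ 0 → Phi (RatFunc.C c) f = 1 := by
    intro c hc
    have h := Phi_antisym (RatFunc_C_ne_zero hc) hf
    rwa [s1C c hc f hf, mul_one] at h
  have s2L : ∀ a : ℂ, Phi (lin a) f = 1 := by
    intro a
    have h := Phi_antisym (lin_ne_zero a) hf
    rwa [s1L a f hf, mul_one] at h
  have hgf : Phi g f = 1 := Phi_right_gen hf s2C s2L g hg
  have h := Phi_antisym hf hg
  rwa [hgf, mul_one] at h

/-- **Weil reciprocity for `ℂ(t)`**: for nonzero rational functions `f, g ∈ ℂ(t)`,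
the tame symbol `d_p(f,g)` equals `1` for all but finitely many `p ∈ ℂ`, and the
product over all points of `ℂ ∪ {∞}` of the tame symbols equals `1`. -/
theorem weil_reciprocity_ratfunc (f g : RatFunc ℂ) (hf : f ≠ 0) (hg : g ≠ 0) :
    {p : ℂ | tameSymbolAt p f g ≠ 1}.Finite ∧
      (∏ᶠ p : ℂ, tameSymbolAt p f g) * tameSymbolInf f g = 1 := by
  exact ⟨support_finite hf hg, Phi_eq_one hf hg⟩
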